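/- Let a group G act transitively on a nonempty set M, fix m₀ ∈ M, and let H be the stabilizer of m₀ in G. Suppose φ: M → M is a bijection and l ∈ G satisfy φ(k·m) = (l·k·l⁻¹)·φ(m) for all k ∈ G and m ∈ M. Then there exists r in the normalizer N_G(H) of H in G such that φ(g·m₀) = (l·g·r⁻¹)·m₀ for all g ∈ G. -/

import Mathlib

/-- Proposition 2.2, converse direction: on a transitive `G`-set `M` with basepoint `m₀` and
stabilizer `H`, every symmetry `φ` of `M` (with associated element `l ∈ G`) arises from a pair
`(l, r)` with `r` in the normalizer of `H`: `φ (g • m₀) = (l * g * r⁻¹) • m₀` for all `g`. -/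
theorem normalizer_of_symmetry {G M : Type*} [Group G] [MulAction G M] [Nonempty M]
    [MulAction.IsPretransitive G M] (m₀ : M)
    (φ : Equiv.Perm M) (l : G)
    (hφ : ∀ (k : G) (m : M), φ (k • m) = (l * k * l⁻¹) • φ m) :
    ∃ r ∈ Subgroup.normalizer (MulAction.stabilizer G m₀ : Set G),
      ∀ g : G, φ (g • m₀) = (l * g * r⁻¹) • m₀ := by
  obtain ⟨s, hs⟩ := MulAction.exists_smul_eq G m₀ (φ m₀)
  refine ⟨s⁻¹ * l, ?_, ?_⟩
  · rw [Subgroup.mem_normalizer_iff]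
    intro h
    simp only [SetLike.mem_coe, MulAction.mem_stabilizer_iff]
    constructor
    · intro hh
      have := hφ h m₀
      rw [hh] at this
      rw [mul_assoc, mul_smul, mul_smul, mul_smul, inv_smul_eq_iff, mul_inv_rev, inv_inv]
      simp only [← mul_smul, ← mul_assoc]
      rw [mul_smul, hs, ← this]
    · intro hh
      have key : (l * h * l⁻¹) • φ m₀ = φ m₀ := by
        rw [← hs]
        have : (s⁻¹ * l * h * (s⁻¹ * l)⁻¹) • m₀ = m₀ := by
          simpa [mul_assoc] using hh
        calc (l * h * l⁻¹) • s • m₀ = (s * (s⁻¹ * l * h * (s⁻¹ * l)⁻¹)) • m₀ := by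
              simp [mul_smul, mul_assoc]
          _ = s • m₀ := by rw [mul_smul, this]
      have h2 := hφ h m₀
      rw [key] at h2
      exact φ.injective h2
  · intro g
    rw [hφ g m₀, ← hs]
    simp [mul_smul, mul_assoc]
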